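/- arXiv:1409.4615 — 3 statements merged into one kernel-verified Lean document; each statement's English description precedes it below -/
import Mathlib

section
/- Let p be a prime and let (a_s)_{s ∈ ℕ} be a sequence of integers with a_s → +∞. Let (U_s)_{s ∈ ℕ} be a sequence of independent random variables, each distributed according to the Haar probability measure μ on ℤ_p. Then, almost surely, the series ∑_{s=0}^∞ p^{a_s}·U_s converges in ℚ_p, and the law of its sum equals the law of p^{m}·U, where m = min_{s ∈ ℕ} a_s (which is attained since a_s → +∞) and U is a random variable with law μ. -/
open MeasureTheory

noncomputable instance (p : ℕ) [Fact p.Prime] : MeasurableSpace ℤ_[p] := borel _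
instance (p : ℕ) [Fact p.Prime] : BorelSpace ℤ_[p] := ⟨rfl⟩
noncomputable instance (p : ℕ) [Fact p.Prime] : MeasurableSpace ℚ_[p] := borel _
instance (p : ℕ) [Fact p.Prime] : BorelSpace ℚ_[p] := ⟨rfl⟩

open Filter ProbabilityTheory in
/-- Auxiliary summability criterion in `ℤ_[p]`. -/
private lemma aux_summable {p : ℕ} [Fact p.Prime] (b : ℕ → ℕ)
    (hb : Filter.Tendsto b Filter.atTop Filter.atTop) (z : ℕ → ℤ_[p])
    (hz : ∀ s, ‖z s‖ ≤ ((p : ℝ)⁻¹) ^ b s) : Summable z := by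
  apply NonarchimedeanAddGroup.summable_of_tendsto_cofinite_zero
  rw [Nat.cofinite_eq_atTop, tendsto_zero_iff_norm_tendsto_zero]
  have hp1 : (1 : ℝ) < p := by
    exact_mod_cast (Fact.out (p := p.Prime)).one_lt
  have h0 : Filter.Tendsto (fun n : ℕ => ((p : ℝ)⁻¹) ^ n) atTop (nhds 0) := by
    apply tendsto_pow_atTop_nhds_zero_of_lt_one
    · positivity
    · rw [inv_lt_one_iff₀]; right; exact hp1
  exact squeeze_zero (fun s => norm_nonneg _) hz (h0.comp hb)

open Filter ProbabilityTheory in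
private lemma aux_norm_term_le {p : ℕ} [Fact p.Prime] (n : ℕ) (u : ℤ_[p]) :
    ‖(p : ℤ_[p]) ^ n * u‖ ≤ ((p : ℝ)⁻¹) ^ n := by
  calc ‖(p : ℤ_[p]) ^ n * u‖ ≤ ‖(p : ℤ_[p]) ^ n‖ * ‖u‖ := norm_mul_le _ _
    _ ≤ ‖(p : ℤ_[p]) ^ n‖ * 1 := by
        gcongr; exact PadicInt.norm_le_one u
    _ = ((p : ℝ)⁻¹) ^ n := by
        rw [mul_one, norm_pow, PadicInt.norm_p]

open Filter ProbabilityTheory in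
/-- Convolution with a Haar probability measure is Haar. -/
private lemma aux_conv_haar {p : ℕ} [Fact p.Prime]
    (μ ν : Measure ℤ_[p]) [μ.IsAddHaarMeasure] [IsProbabilityMeasure μ]
    [IsProbabilityMeasure ν] :
    Measure.map (fun x : ℤ_[p] × ℤ_[p] => x.1 + x.2) (μ.prod ν) = μ := by
  ext s hs
  rw [Measure.map_apply measurable_add hs,
    Measure.prod_apply_symm (measurable_add hs)]
  have hslice : ∀ y : ℤ_[p],
      ((fun x : ℤ_[p] => (x, y)) ⁻¹' ((fun x : ℤ_[p] × ℤ_[p] => x.1 + x.2) ⁻¹' s))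
        = (fun x : ℤ_[p] => x + y) ⁻¹' s := fun y => rfl
  simp_rw [hslice, measure_preimage_add_right μ _ s]
  simp


open Filter ProbabilityTheory in
/-- The tail sum is measurable w.r.t. the other variables and independent of `U' s0`. -/
private lemma aux_W {p : ℕ} [Fact p.Prime] {Ω : Type*} [mΩ : MeasurableSpace Ω]
    (P : Measure Ω) [IsProbabilityMeasure P]
    (U' : ℕ → Ω → ℤ_[p]) (hU'meas : ∀ s, Measurable (U' s))
    (hindep' : iIndepFun U' P)
    (s0 : ℕ) (c : ℕ → ℤ_[p]) (W : Ω → ℤ_[p])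
    (hWtend : ∀ ω, Tendsto (fun n => ∑ s ∈ Finset.range n,
        if s = s0 then 0 else c s * U' s ω) atTop (nhds (W ω))) :
    Measurable W ∧ IndepFun (U' s0) W P := by
  set M' : MeasurableSpace Ω :=
    ⨆ s ∈ ({s0}ᶜ : Set ℕ), MeasurableSpace.comap (U' s) inferInstance with hM'def
  have hM'le : M' ≤ mΩ :=
    iSup₂_le fun s _ => measurable_iff_comap_le.mp (hU'meas s)
  have hWmeas' : Measurable[M'] W := by
    have hterm : ∀ s : ℕ,
        Measurable[M'] (fun ω => if s = s0 then 0 else c s * U' s ω) := by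
      intro s
      by_cases h : s = s0
      · simp only [h, if_pos rfl]
        exact measurable_const
      · simp only [if_neg h]
        have hUs : Measurable[M'] (U' s) := by
          refine measurable_iff_comap_le.mpr ?_
          exact le_iSup₂ (f := fun (s : ℕ) (_ : s ∈ ({s0}ᶜ : Set ℕ)) =>
            MeasurableSpace.comap (U' s) inferInstance) s h
        exact ((continuous_mul_left (c s)).measurable).comp hUs
    have hpartial : ∀ n : ℕ, Measurable[M']
        (fun ω => ∑ s ∈ Finset.range n, if s = s0 then 0 else c s * U' s ω) :=
      fun n => Finset.measurable_sum _ fun s _ => hterm s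
    apply measurable_of_tendsto_metrizable (f := fun n ω =>
      ∑ s ∈ Finset.range n, if s = s0 then 0 else c s * U' s ω) hpartial
    rw [tendsto_pi_nhds]
    exact hWtend
  refine ⟨hWmeas'.mono hM'le le_rfl, ?_⟩
  rw [IndepFun_iff_Indep]
  have h1 : Indep (⨆ s ∈ ({s0} : Set ℕ), MeasurableSpace.comap (U' s) inferInstance) M' P :=
    indep_biSup_compl (fun s => measurable_iff_comap_le.mp (hU'meas s)) hindep'.iIndep {s0}
  refine indep_of_indep_of_le_right (indep_of_indep_of_le_left h1 ?_) ?_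
  · exact le_iSup₂ (f := fun (s : ℕ) (_ : s ∈ ({s0} : Set ℕ)) =>
      MeasurableSpace.comap (U' s) inferInstance) s0 rfl
  · exact measurable_iff_comap_le.mp hWmeas'

open Filter ProbabilityTheory in
/-- Infinite-time version of the "trivial key Lemma": if `(U_s)` are i.i.d. Haar
on `ℤ_p` and `a_s → +∞` in `ℤ`, then a.s. the series `∑ p^(a_s)·U_s` converges in
`ℚ_p` and its sum has the same law as `p^m·U`, where `m = min_s a_s`. -/
theorem trivial_key_lemma_infinite (p : ℕ) [Fact p.Prime]
    (μ : Measure ℤ_[p]) [μ.IsAddHaarMeasure] [IsProbabilityMeasure μ]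
    {Ω : Type*} [MeasurableSpace Ω] (P : Measure Ω) [IsProbabilityMeasure P]
    (U : ℕ → Ω → ℤ_[p])
    (hindep : ProbabilityTheory.iIndepFun U P)
    (hlaw : ∀ s, Measure.map (U s) P = μ)
    (a : ℕ → ℤ) (ha : Filter.Tendsto a Filter.atTop Filter.atTop)
    (m : ℤ) (hm : IsLeast (Set.range a) m) :
    (∀ᵐ ω ∂P, Summable (fun s => (p : ℚ_[p]) ^ (a s) * (U s ω : ℚ_[p]))) ∧
      Measure.map (fun ω => ∑' s, (p : ℚ_[p]) ^ (a s) * (U s ω : ℚ_[p])) P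
        = Measure.map (fun u : ℤ_[p] => (p : ℚ_[p]) ^ m * (u : ℚ_[p])) μ := by
  classical
  have hprime : p.Prime := Fact.out
  have hple : ∀ s, m ≤ a s := fun s => hm.2 ⟨s, rfl⟩
  obtain ⟨s0, hs0⟩ := hm.1
  set b : ℕ → ℕ := fun s => (a s - m).toNat with hbdef
  have hb : ∀ s, (b s : ℤ) = a s - m := fun s => Int.toNat_of_nonneg (by linarith [hple s])
  have hbtop : Tendsto b atTop atTop := by
    rw [tendsto_atTop]
    intro N
    filter_upwards [ha.eventually_ge_atTop (m + N)] with s hs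
    have := hb s
    omega
  have hbs0 : b s0 = 0 := by
    have := hb s0
    omega
  -- continuity and measurability of the coercion and the target map
  have hcoe_cont : Continuous ((↑) : ℤ_[p] → ℚ_[p]) := by
    refine AddMonoidHomClass.continuous_of_bound (PadicInt.Coe.ringHom (p := p)) 1 fun x => ?_
    rw [show (PadicInt.Coe.ringHom (p := p)) x = (x : ℚ_[p]) from rfl, one_mul,
      PadicInt.norm_def]
  have hp0 : (p : ℚ_[p]) ≠ 0 := by
    exact_mod_cast hprime.ne_zero
  have hg_cont : Continuous (fun u : ℤ_[p] => (p : ℚ_[p]) ^ m * (u : ℚ_[p])) :=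
    continuous_const.mul hcoe_cont
  have hg_meas : Measurable (fun u : ℤ_[p] => (p : ℚ_[p]) ^ m * (u : ℚ_[p])) :=
    hg_cont.measurable
  -- the key pointwise computation
  have key : ∀ v : ℕ → ℤ_[p],
      HasSum (fun s => (p : ℚ_[p]) ^ (a s) * (v s : ℚ_[p]))
        ((p : ℚ_[p]) ^ m * ((∑' s, (p : ℤ_[p]) ^ (b s) * v s : ℤ_[p]) : ℚ_[p])) := by
    intro v
    have hsummable : Summable (fun s => (p : ℤ_[p]) ^ (b s) * v s) :=
      aux_summable b hbtop _ (fun s => aux_norm_term_le _ _)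
    have g0 : ℤ_[p] →+ ℚ_[p] :=
      AddMonoidHom.mk' (fun u : ℤ_[p] => (p : ℚ_[p]) ^ m * (u : ℚ_[p]))
        (by intro x y; push_cast; ring)
    have hmap := hsummable.hasSum.map
      (AddMonoidHom.mk' (fun u : ℤ_[p] => (p : ℚ_[p]) ^ m * (u : ℚ_[p]))
        (by intro x y; push_cast; ring)) hg_cont
    convert hmap using 2 with s
    show (p : ℚ_[p]) ^ (a s) * (v s : ℚ_[p])
        = (p : ℚ_[p]) ^ m * (((p : ℤ_[p]) ^ (b s) * v s : ℤ_[p]) : ℚ_[p])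
    have has : a s = m + (b s : ℤ) := by have := hb s; omega
    push_cast
    rw [has, zpow_add₀ hp0, zpow_natCast]
    ring
    rfl
  -- first conjunct
  refine ⟨Filter.Eventually.of_forall fun ω => (key (fun s => U s ω)).summable, ?_⟩
  -- measurable modifications
  have hAE : ∀ s, AEMeasurable (U s) P := fun s =>
    aemeasurable_of_map_neZero (by rw [hlaw s]; exact ⟨IsProbabilityMeasure.ne_zero μ⟩)
  set U' : ℕ → Ω → ℤ_[p] := fun s => (hAE s).mk (U s) with hU'def
  have hU'meas : ∀ s, Measurable (U' s) := fun s => (hAE s).measurable_mk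
  have hUU' : ∀ s, U s =ᵐ[P] U' s := fun s => (hAE s).ae_eq_mk
  have hae_all : ∀ᵐ ω ∂P, ∀ s, U s ω = U' s ω := MeasureTheory.ae_all_iff.mpr hUU'
  have hlaw' : ∀ s, Measure.map (U' s) P = μ := fun s =>
    (Measure.map_congr (hUU' s)).symm.trans (hlaw s)
  -- transfer independence to the modifications
  have hindep' : iIndepFun U' P := by
    rw [iIndepFun_iff_measure_inter_preimage_eq_mul] at hindep ⊢
    intro S sets hS
    have hInter : ((⋂ i ∈ S, U' i ⁻¹' sets i : Set Ω) : Set Ω)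
        =ᵐ[P] (⋂ i ∈ S, U i ⁻¹' sets i : Set Ω) := by
      rw [Filter.eventuallyEq_set]
      filter_upwards [hae_all] with ω hω
      simp only [Set.mem_iInter, Set.mem_preimage]
      constructor
      · intro h i hi; rw [hω i]; exact h i hi
      · intro h i hi; rw [← hω i]; exact h i hi
    rw [measure_congr hInter, hindep S hS]
    refine Finset.prod_congr rfl fun i _ => ?_
    exact measure_congr ((hUU' i).preimage _)
  -- the ℤ_p-valued sum
  set f : ℕ → Ω → ℤ_[p] := fun s ω => (p : ℤ_[p]) ^ (b s) * U' s ω with hfdef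
  have hfsum : ∀ ω, Summable (fun s => f s ω) := fun ω =>
    aux_summable b hbtop _ (fun s => aux_norm_term_le _ _)
  set V : Ω → ℤ_[p] := fun ω => ∑' s, f s ω with hVdef
  set W : Ω → ℤ_[p] := fun ω => ∑' s, if s = s0 then 0 else f s ω with hWdef
  have hWsum : ∀ ω, Summable (fun s => if s = s0 then 0 else f s ω) := fun ω =>
    aux_summable b hbtop _ (fun s => by
      by_cases h : s = s0
      · rw [if_pos h, norm_zero]; positivity
      · rw [if_neg h]; exact aux_norm_term_le _ _)
  have hVW : ∀ ω, V ω = U' s0 ω + W ω := by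
    intro ω
    rw [hVdef]
    simp only
    rw [Summable.tsum_eq_add_tsum_ite (hfsum ω) s0]
    congr 1
    show (p : ℤ_[p]) ^ (b s0) * U' s0 ω = U' s0 ω
    rw [hbs0, pow_zero, one_mul]
  -- measurability of W and independence, via aux_W
  obtain ⟨hWmeas, hIndepFun⟩ := aux_W P U' hU'meas hindep' s0 (fun s => (p : ℤ_[p]) ^ (b s)) W
    (fun ω => (hWsum ω).hasSum.tendsto_sum_nat)
  -- law of V
  haveI : IsProbabilityMeasure (Measure.map W P) :=
    Measure.isProbabilityMeasure_map hWmeas.aemeasurable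
  have hVmeas : Measurable V := by
    have : V = fun ω => U' s0 ω + W ω := funext hVW
    rw [this]
    exact (hU'meas s0).add hWmeas
  have hmapV : Measure.map V P = μ := by
    have hpair := (indepFun_iff_map_prod_eq_prod_map_map
      (hU'meas s0).aemeasurable hWmeas.aemeasurable).mp hIndepFun
    calc Measure.map V P
        = Measure.map ((fun x : ℤ_[p] × ℤ_[p] => x.1 + x.2)
            ∘ (fun ω => (U' s0 ω, W ω))) P := by
          congr 1
          funext ω
          exact hVW ω
      _ = Measure.map (fun x : ℤ_[p] × ℤ_[p] => x.1 + x.2)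
            (Measure.map (fun ω => (U' s0 ω, W ω)) P) :=
          (Measure.map_map measurable_add ((hU'meas s0).prodMk hWmeas)).symm
      _ = Measure.map (fun x : ℤ_[p] × ℤ_[p] => x.1 + x.2)
            (μ.prod (Measure.map W P)) := by rw [hpair, hlaw' s0]
      _ = μ := aux_conv_haar μ (Measure.map W P)
  -- conclusion
  have hfinal : (fun ω => ∑' s, (p : ℚ_[p]) ^ (a s) * (U' s ω : ℚ_[p]))
      = (fun u : ℤ_[p] => (p : ℚ_[p]) ^ m * (u : ℚ_[p])) ∘ V := by
    funext ω
    exact (key (fun s => U' s ω)).tsum_eq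
  have hcongr : (fun ω => ∑' s, (p : ℚ_[p]) ^ (a s) * (U s ω : ℚ_[p]))
      =ᵐ[P] (fun ω => ∑' s, (p : ℚ_[p]) ^ (a s) * (U' s ω : ℚ_[p])) := by
    filter_upwards [hae_all] with ω hω
    exact tsum_congr fun s => by rw [hω s]
  rw [Measure.map_congr hcongr, hfinal,
    ← Measure.map_map hg_meas hVmeas, hmapV]
end

section
/- Let V be a real vector space, let α : V → ℝ and z : V → ℝ be linear functionals, and let α^∨ ∈ V satisfy α(α^∨) = 2. Define the reflection s : V → V by s(v) = v − α(v)·α^∨. Let S ⊆ V be a finite set that is stable under s (i.e., s maps S onto S). Assume z(α^∨) > 0 and that there exists μ₀ ∈ S with α(μ₀) ≠ 0. Then ∑_{μ ∈ S} α(μ)·exp(z(μ)) > 0. -/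
lemma drift_term_pos {a b c : ℝ} (hc : 0 < c) (ha : a ≠ 0) :
    0 < a * (Real.exp b - Real.exp (b - a * c)) := by
  rcases ha.lt_or_gt with h | h
  · have hlt : b < b - a * c := by nlinarith
    have := Real.exp_lt_exp.mpr hlt
    nlinarith
  · have hlt : b - a * c < b := by nlinarith
    have := Real.exp_lt_exp.mpr hlt
    nlinarith

lemma drift_term_nonneg {a b c : ℝ} (hc : 0 < c) :
    0 ≤ a * (Real.exp b - Real.exp (b - a * c)) := by
  rcases eq_or_ne a 0 with h | h
  · simp [h]
  · exact (drift_term_pos hc h).le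

/-- Core of the drift lemma (Lemma 2.6): if `S` is a finite set of vectors stable
under the reflection `s(v) = v - α(v)·α^∨` (with `α(α^∨) = 2`), `z(α^∨) > 0`, and
`α` does not vanish identically on `S`, then `∑_{μ ∈ S} α(μ)·exp(z(μ)) > 0`. -/
theorem drift_positive {V : Type*} [AddCommGroup V] [Module ℝ V]
    (α z : V →ₗ[ℝ] ℝ) (coroot : V) (hpair : α coroot = 2)
    (S : Finset V) (hstable : ∀ μ ∈ S, μ - α μ • coroot ∈ S)
    (hz : 0 < z coroot) (hne : ∃ μ₀ ∈ S, α μ₀ ≠ 0) :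
    0 < ∑ μ ∈ S, α μ * Real.exp (z μ) := by
  have hinv : ∀ μ ∈ S, (μ - α μ • coroot) - α (μ - α μ • coroot) • coroot = μ := by
    intro μ _
    have : α (μ - α μ • coroot) = -α μ := by
      simp [map_sub, map_smul, hpair]; ring
    rw [this]
    module
  have key : ∑ μ ∈ S, α μ * Real.exp (z μ)
      = ∑ μ ∈ S, α (μ - α μ • coroot) * Real.exp (z (μ - α μ • coroot)) := by
    refine Finset.sum_nbij' (fun μ => μ - α μ • coroot) (fun μ => μ - α μ • coroot)
      hstable hstable hinv hinv ?_
    intro μ hμ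
    rw [hinv μ hμ]
  have h2 : (2 : ℝ) * ∑ μ ∈ S, α μ * Real.exp (z μ)
      = ∑ μ ∈ S, α μ * (Real.exp (z μ) - Real.exp (z μ - α μ * z coroot)) := by
    rw [two_mul]
    nth_rewrite 2 [key]
    rw [← Finset.sum_add_distrib]
    refine Finset.sum_congr rfl fun μ _ => ?_
    have h1 : α (μ - α μ • coroot) = -α μ := by
      simp [map_sub, map_smul, hpair]; ring
    have h2 : z (μ - α μ • coroot) = z μ - α μ * z coroot := by
      simp [map_sub, map_smul]
    rw [h1, h2]; ring
  have hpos : 0 < ∑ μ ∈ S, α μ * (Real.exp (z μ) - Real.exp (z μ - α μ * z coroot)) := by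
    obtain ⟨μ₀, hμ₀S, hμ₀⟩ := hne
    exact Finset.sum_pos' (fun μ _ => drift_term_nonneg hz)
      ⟨μ₀, hμ₀S, drift_term_pos hz hμ₀⟩
  linarith
end

section
/- Let p be a prime, n ≥ 1, and let (N_t)_{t ∈ ℕ} be a sequence of n×n matrices over ℚ_p that are lower unitriangular (i.e., (N_t)_{ii} = 1 for all i and (N_t)_{ij} = 0 whenever i < j). Suppose the multiplicative increments Δ_t := N_t^{−1} · N_{t+1} converge to the identity matrix as t → ∞ (entrywise in the p-adic topology). Then the sequence (N_t) converges entrywise to some lower unitriangular matrix N_∞ over ℚ_p. -/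
open Filter

/-- Deterministic convergence theorem (Theorem 6.1) for the unipotent group of
`GL_n(ℚ_p)`: a sequence of lower unitriangular matrices over `ℚ_p` whose
multiplicative increments `N_t⁻¹ · N_{t+1}` tend to the identity converges
(entrywise) to a lower unitriangular matrix. -/
theorem unitriangular_convergence (p n : ℕ) [Fact p.Prime] (hn : 1 ≤ n)
    (N : ℕ → Matrix (Fin n) (Fin n) ℚ_[p])
    (hN : ∀ t, (∀ i, N t i i = 1) ∧ ∀ i j : Fin n, i < j → N t i j = 0)
    (hconv : Tendsto (fun t => (N t)⁻¹ * N (t + 1)) atTop (nhds 1)) :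
    ∃ L : Matrix (Fin n) (Fin n) ℚ_[p],
      ((∀ i, L i i = 1) ∧ ∀ i j : Fin n, i < j → L i j = 0) ∧
        Tendsto N atTop (nhds L) := by
  haveI : Nonempty (Fin n) := ⟨⟨0, hn⟩⟩
  -- each N t is invertible (det = 1)
  have hdet : ∀ t, IsUnit (N t).det := by
    intro t
    have hbt : (N t).BlockTriangular (OrderDual.toDual) := by
      intro i j hij
      exact (hN t).2 i j hij
    rw [Matrix.det_of_lowerTriangular (N t) hbt]
    simp [(hN t).1]
  set Δ : ℕ → Matrix (Fin n) (Fin n) ℚ_[p] := fun t => (N t)⁻¹ * N (t + 1) with hΔ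
  have hmul : ∀ t, N t * Δ t = N (t + 1) := by
    intro t
    rw [hΔ]
    simp only [← Matrix.mul_assoc]
    rw [Matrix.mul_nonsing_inv (N t) (hdet t), Matrix.one_mul]
  -- the additive increments
  set d : ℕ → Matrix (Fin n) (Fin n) ℚ_[p] := fun t => N (t + 1) - N t with hd
  have hdNΔ : ∀ t, d t = N t * (Δ t - 1) := by
    intro t
    rw [hd]
    simp only [Matrix.mul_sub, Matrix.mul_one, hmul]
  -- Δ - 1 → 0
  have hconv' : Tendsto (fun t => Δ t - 1) atTop (nhds 0) := by
    have := hconv.sub_const 1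
    simpa using this
  have hentry : ∀ l j : Fin n, Tendsto (fun t => (Δ t - 1) l j) atTop (nhds 0) := by
    intro l j
    have h1 := tendsto_pi_nhds.1 hconv' l
    have h2 := tendsto_pi_nhds.1 h1 j
    simpa using h2
  -- the entrywise sup of |Δ t - 1|
  set C : ℕ → ℝ := fun t =>
    Finset.univ.sup' Finset.univ_nonempty (fun q : Fin n × Fin n => ‖(Δ t - 1) q.1 q.2‖) with hC
  have hCle : ∀ t (l j : Fin n), ‖(Δ t - 1) l j‖ ≤ C t := by
    intro t l j
    exact Finset.le_sup' (f := fun q : Fin n × Fin n => ‖(Δ t - 1) q.1 q.2‖)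
      (Finset.mem_univ (l, j))
  have hCnonneg : ∀ t, 0 ≤ C t :=
    fun t => le_trans (norm_nonneg _) (hCle t (Classical.arbitrary _) (Classical.arbitrary _))
  have hC0 : Tendsto C atTop (nhds 0) := by
    have hsum : Tendsto (fun t => ∑ q : Fin n × Fin n, ‖(Δ t - 1) q.1 q.2‖) atTop (nhds 0) := by
      have := tendsto_finset_sum (Finset.univ : Finset (Fin n × Fin n))
        (fun q _ => (hentry q.1 q.2).norm)
      simpa using this
    refine squeeze_zero hCnonneg (fun t => ?_) hsum
    refine Finset.sup'_le _ _ (fun q _ => ?_)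
    exact Finset.single_le_sum (f := fun q : Fin n × Fin n => ‖(Δ t - 1) q.1 q.2‖)
      (fun i _ => norm_nonneg _) (Finset.mem_univ q)
  -- entrywise sup of |N t|
  set B : ℕ → ℝ := fun t =>
    Finset.univ.sup' Finset.univ_nonempty (fun q : Fin n × Fin n => ‖N t q.1 q.2‖) with hB
  have hBle : ∀ t (i j : Fin n), ‖N t i j‖ ≤ B t := by
    intro t i j
    exact Finset.le_sup' (f := fun q : Fin n × Fin n => ‖N t q.1 q.2‖) (Finset.mem_univ (i, j))
  have hBnonneg : ∀ t, 0 ≤ B t :=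
    fun t => le_trans (norm_nonneg _) (hBle t (Classical.arbitrary _) (Classical.arbitrary _))
  -- pick T with C t ≤ 1 for t ≥ T
  obtain ⟨T, hT⟩ : ∃ T, ∀ t ≥ T, C t ≤ 1 := by
    have := (hC0.eventually (ge_mem_nhds (show (0:ℝ) < 1 by norm_num)))
    obtain ⟨T, hT⟩ := eventually_atTop.1 this
    exact ⟨T, fun t ht => hT t ht⟩
  -- key entrywise bound on d
  have hdbound : ∀ t (i j : Fin n), ‖d t i j‖ ≤ B t * C t := by
    intro t i j
    have : d t i j = ∑ l, N t i l * (Δ t - 1) l j := by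
      rw [hdNΔ t]; rw [Matrix.mul_apply]
    rw [this]
    refine IsUltrametricDist.norm_sum_le_of_forall_le_of_nonneg
      (mul_nonneg (hBnonneg t) (hCnonneg t)) (fun l _ => ?_)
    rw [norm_mul]
    exact mul_le_mul (hBle t i l) (hCle t l j) (norm_nonneg _) (hBnonneg t)
  -- B is eventually non-increasing, hence bounded by B T beyond T
  have hBT : ∀ t ≥ T, B t ≤ B T := by
    intro t ht
    induction t with
    | zero => simp [Nat.le_zero.1 ht]
    | succ s ih =>
      rcases Nat.lt_or_ge T (s+1) with hlt | hge
      · have hsT : s ≥ T := Nat.lt_succ_iff.1 hlt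
        have ihs := ih hsT
        refine le_trans (Finset.sup'_le _ _ (fun q _ => ?_)) ihs
        have hEq : N (s+1) q.1 q.2 = N s q.1 q.2 + d s q.1 q.2 := by
          simp [hd]
        rw [hEq]
        refine le_trans (IsUltrametricDist.norm_add_le_max _ _) (max_le (hBle s q.1 q.2) ?_)
        refine le_trans (hdbound s q.1 q.2) ?_
        calc B s * C s ≤ B s * 1 := mul_le_mul_of_nonneg_left (hT s hsT) (hBnonneg s)
          _ = B s := mul_one _
      · have : T = s + 1 := le_antisymm (le_of_not_gt (by omega)) (by omega)
        simp [this]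
  -- each entry of d tends to 0
  have hd0 : ∀ i j : Fin n, Tendsto (fun t => d t i j) atTop (nhds 0) := by
    intro i j
    refine squeeze_zero_norm' ?_ (by simpa using hC0.const_mul (B T))
    refine eventually_atTop.2 ⟨T, fun t ht => ?_⟩
    exact le_trans (hdbound t i j)
      (mul_le_mul_of_nonneg_right (hBT t ht) (hCnonneg t))
  -- each entry of d is summable, so each entry of N converges
  have hsummable : ∀ i j : Fin n, Summable (fun t => d t i j) := by
    intro i j
    refine NonarchimedeanAddGroup.summable_of_tendsto_cofinite_zero ?_
    rw [Nat.cofinite_eq_atTop]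
    exact hd0 i j
  set L : Matrix (Fin n) (Fin n) ℚ_[p] :=
    Matrix.of (fun i j => N 0 i j + ∑' t, d t i j) with hL
  have hNL : ∀ i j : Fin n, Tendsto (fun t => N t i j) atTop (nhds (L i j)) := by
    intro i j
    have hs := (hsummable i j).hasSum.tendsto_sum_nat
    have htel : ∀ m, ∑ k ∈ Finset.range m, d k i j = N m i j - N 0 i j := by
      intro m
      have := Finset.sum_range_sub (fun k => N k i j) m
      simpa [hd] using this
    have := hs.const_add (N 0 i j)
    simp only [htel] at this
    simpa [hL, add_sub_cancel] using this
  have hLim : Tendsto N atTop (nhds L) := by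
    refine tendsto_pi_nhds.2 ?_
    intro i
    rw [tendsto_pi_nhds]
    intro j
    exact hNL i j
  refine ⟨L, ⟨⟨fun i => ?_, fun i j hij => ?_⟩, hLim⟩⟩
  · exact (show (1:ℚ_[p]) = L i i by simpa [(fun t => (hN t).1 i)] using hNL i i).symm
  · exact (show (0:ℚ_[p]) = L i j by simpa [(fun t => (hN t).2 i j hij)] using hNL i j).symm
end
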